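/- With T_k = R^k A L^{k-1} as above, for every k ∈ {1,...,m} the partial product satisfies T_k T_{k-1} ··· T_1 = R^k A^k; in particular the full Gauss–Seidel product T = T_m ··· T_1 equals A^m. -/

import Mathlib

/-- T_k T_{k-1} ⋯ T_1 = R^k A^k; in particular T = T_m ⋯ T_1 = A^m. -/
theorem stmt_13 (m : ℕ) (hm : 2 ≤ m) (α : ℕ → ℝ)
    (hα : ∀ i, i < m → 0 ≤ α i) (hsum : ∑ i ∈ Finset.range m, α i = 1)
    (A R L : Matrix (Fin m) (Fin m) ℝ)
    (hA : ∀ i j : Fin m, A i j =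
      if (i : ℕ) < m - 1 then (if (j : ℕ) = (i : ℕ) + 1 then 1 else 0) else α j)
    (hR : ∀ i j : Fin m, R i j = if (i : ℕ) = ((j : ℕ) + 1) % m then 1 else 0)
    (hL : ∀ i j : Fin m, L i j = if (j : ℕ) = ((i : ℕ) + 1) % m then 1 else 0)
    (T : ℕ → Matrix (Fin m) (Fin m) ℝ)
    (hT : ∀ k, 1 ≤ k → k ≤ m → ∀ i j : Fin m, T k i j =
      if (i : ℕ) = k - 1 then
        (if (j : ℕ) < k - 1 then α (m - (k - 1) + (j : ℕ)) else α ((j : ℕ) - (k - 1)))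
      else (if i = j then 1 else 0)) :
    (∀ k, 1 ≤ k → k ≤ m →
      ((List.range k).map (fun j => T (k - j))).prod = R ^ k * A ^ k) ∧
    ((List.range m).map (fun j => T (m - j))).prod = A ^ m := by
  have hm0 : 0 < m := by omega
  haveI : NeZero m := ⟨by omega⟩
  letI : AddMonoidWithOne (Fin m) := Fin.instAddMonoidWithOne m
  have hone : ((1 : Fin m) : ℕ) = 1 := by
    rw [Fin.val_one']; exact Nat.mod_eq_of_lt (by omega)
  have haddone : ∀ a : Fin m, ((a + 1 : Fin m) : ℕ) = (a.val + 1) % m := by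
    intro a; rw [Fin.add_def, hone]
  have hR' : ∀ i j : Fin m, R i j = if i = j + 1 then 1 else 0 := by
    intro i j; rw [hR]
    congr 1
    rw [Fin.ext_iff, haddone]
  have hL' : ∀ i j : Fin m, L i j = if j = i + 1 then 1 else 0 := by
    intro i j; rw [hL]
    congr 1
    rw [Fin.ext_iff, haddone]
  have mulR : ∀ (M : Matrix (Fin m) (Fin m) ℝ) (i j : Fin m), (M * R) i j = M i (j + 1) := by
    intro M i j
    rw [Matrix.mul_apply]
    simp only [hR', mul_ite, mul_one, mul_zero]
    rw [Finset.sum_ite_eq' Finset.univ (j + 1) (fun l => M i l)]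
    simp
  have mulL : ∀ (M : Matrix (Fin m) (Fin m) ℝ) (i j : Fin m), (M * L) i j = M i (j - 1) := by
    intro M i j
    rw [Matrix.mul_apply]
    have hiff : ∀ l : Fin m, (j = l + 1) ↔ (l = j - 1) := by
      intro l; rw [eq_sub_iff_add_eq, eq_comm]
    simp only [hL', hiff, mul_ite, mul_one, mul_zero]
    rw [Finset.sum_ite_eq' Finset.univ (j - 1) (fun l => M i l)]
    simp
  have hRpow : ∀ (k : ℕ) (i l : Fin m), (R ^ k) i l = if l = i - (k : Fin m) then 1 else 0 := by
    intro k
    induction k with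
    | zero =>
      intro i l
      simp only [pow_zero, Nat.cast_zero, sub_zero, Matrix.one_apply]
      exact if_congr eq_comm rfl rfl
    | succ k ih =>
      intro i l
      rw [pow_succ, mulR, ih]
      have hiff : (l + 1 = i - (k : Fin m)) ↔ (l = i - ((k + 1 : ℕ) : Fin m)) := by
        push_cast
        rw [eq_sub_iff_add_eq, eq_sub_iff_add_eq, add_assoc, add_comm 1 ((k : ℕ) : Fin m)]
      exact if_congr hiff rfl rfl
  have hLpow : ∀ (k : ℕ) (i l : Fin m), (L ^ k) i l = if i = l - (k : Fin m) then 1 else 0 := by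
    intro k
    induction k with
    | zero =>
      intro i l
      simp only [pow_zero, Nat.cast_zero, sub_zero]
      exact Matrix.one_apply
    | succ k ih =>
      intro i l
      rw [pow_succ, mulL, ih]
      have heq : l - 1 - ((k : ℕ) : Fin m) = l - ((k + 1 : ℕ) : Fin m) := by
        push_cast
        rw [sub_sub, add_comm]
      rw [heq]
  have mulLpow : ∀ (M : Matrix (Fin m) (Fin m) ℝ) (k : ℕ) (i j : Fin m),
      (M * L ^ k) i j = M i (j - (k : Fin m)) := by
    intro M k i j
    rw [Matrix.mul_apply]
    simp only [hLpow, mul_ite, mul_one, mul_zero]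
    rw [Finset.sum_ite_eq' Finset.univ (j - (k : Fin m)) (fun l => M i l)]
    simp
  have Rpowmul : ∀ (M : Matrix (Fin m) (Fin m) ℝ) (k : ℕ) (i j : Fin m),
      (R ^ k * M) i j = M (i - (k : Fin m)) j := by
    intro M k i j
    rw [Matrix.mul_apply]
    simp only [hRpow, ite_mul, one_mul, zero_mul]
    rw [Finset.sum_ite_eq' Finset.univ (i - (k : Fin m)) (fun l => M l j)]
    simp
  have hLR1 : L * R = 1 := by
    ext i j
    rw [mulR, hL', Matrix.one_apply]
    have hiff : (j + 1 = i + 1) ↔ (i = j) := by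
      constructor
      · intro h; exact (add_left_injective 1 h).symm
      · intro h; rw [h]
    exact if_congr hiff rfl rfl
  have hLRpow : ∀ k : ℕ, L ^ k * R ^ k = 1 := by
    intro k
    induction k with
    | zero => simp
    | succ k ih =>
      rw [pow_succ, pow_succ' R, mul_assoc, ← mul_assoc L, hLR1, one_mul, ih]
  have hRm : R ^ m = 1 := by
    ext i j
    rw [hRpow]
    have heq : i - ((m : ℕ) : Fin m) = i := by
      rw [Fin.natCast_self, sub_zero]
    rw [heq, Matrix.one_apply]
    exact if_congr eq_comm rfl rfl
  have hsub : ∀ (a : Fin m) (b : ℕ),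
      ((a - (b : Fin m)) : Fin m).val = (a.val + (m - b % m)) % m := by
    intro a b
    rw [Fin.sub_def]
    simp [Fin.val_natCast, Nat.add_comm]
  have hsubval : ∀ (a : Fin m) (b : ℕ),
      ((a - (b : Fin m)) : Fin m).val =
        if a.val < b % m then a.val + m - b % m else a.val - b % m := by
    intro a b
    rw [hsub]
    have hq : b % m < m := Nat.mod_lt b hm0
    have ha := a.isLt
    split
    · rw [Nat.mod_eq_of_lt (by omega)]; omega
    · have h : a.val + (m - b % m) = (a.val - b % m) + m := by omega
      rw [h, Nat.add_mod_right, Nat.mod_eq_of_lt (by omega)]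
  have hT' : ∀ k, 1 ≤ k → k ≤ m → T k = R ^ k * A * L ^ (k - 1) := by
    intro k hk1 hkm
    have hk1m : (k - 1) % m = k - 1 := Nat.mod_eq_of_lt (by omega)
    have hkme : (k < m ∧ k % m = k) ∨ (k = m ∧ k % m = 0) := by
      rcases eq_or_lt_of_le hkm with h | h
      · right; exact ⟨h, by rw [h, Nat.mod_self]⟩
      · left; exact ⟨h, Nat.mod_eq_of_lt h⟩
    ext i j
    rw [Matrix.mul_assoc, Rpowmul, mulLpow, hT k hk1 hkm, hA]
    have hiv := i.isLt
    have hjv := j.isLt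
    by_cases hik : (i : ℕ) = k - 1
    · rw [if_pos hik]
      have hvi : ((i - ((k : ℕ) : Fin m)) : Fin m).val = m - 1 := by
        rw [hsubval]
        rcases hkme with ⟨h1, h2⟩ | ⟨h1, h2⟩ <;> rw [h2] <;> split <;> omega
      rw [hvi, if_neg (show ¬ m - 1 < m - 1 by omega), hsubval j (k - 1), hk1m]
      by_cases hj2 : (j : ℕ) < k - 1
      · rw [if_pos hj2, if_pos hj2]; congr 1; omega
      · rw [if_neg hj2, if_neg hj2]
    · rw [if_neg hik]
      have hvi : ((i - ((k : ℕ) : Fin m)) : Fin m).val < m - 1 := by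
        rw [hsubval]
        rcases hkme with ⟨h1, h2⟩ | ⟨h1, h2⟩ <;> rw [h2] <;> split <;> omega
      rw [if_pos hvi]
      have hcond : (((j - (((k - 1) : ℕ) : Fin m)) : Fin m).val
          = ((i - ((k : ℕ) : Fin m)) : Fin m).val + 1) ↔ i = j := by
        rw [hsubval, hsubval, hk1m, Fin.ext_iff]
        rcases hkme with ⟨h1, h2⟩ | ⟨h1, h2⟩ <;> rw [h2] <;> split <;> split <;> omega
      rw [if_congr hcond rfl rfl]
  have main : ∀ k, 1 ≤ k → k ≤ m →
      ((List.range k).map (fun j => T (k - j))).prod = R ^ k * A ^ k := by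
    intro k hk1
    induction k, hk1 using Nat.le_induction with
    | base =>
      intro _
      have h1 : List.range 1 = [0] := rfl
      simp only [h1, List.map_cons, List.map_nil, List.prod_cons, List.prod_nil,
        mul_one, Nat.sub_zero]
      rw [hT' 1 le_rfl (by omega)]
      simp
    | succ n hn ih =>
      intro hnm
      rw [List.range_succ_eq_map]
      simp only [List.map_cons, List.map_map, List.prod_cons, Nat.sub_zero]
      have hfun : ((fun j => T (n + 1 - j)) ∘ Nat.succ) = fun j => T (n - j) := by
        funext j; simp [Function.comp, Nat.succ_sub_succ]
      rw [hfun, ih (by omega), hT' (n + 1) (by omega) hnm, Nat.add_sub_cancel]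
      rw [mul_assoc (R ^ (n + 1) * A), ← mul_assoc (L ^ n), hLRpow, one_mul, mul_assoc,
        ← pow_succ']
  refine ⟨main, ?_⟩
  have h := main m (by omega) le_rfl
  rw [hRm, one_mul] at h
  exact h
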